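/- Let C ⊆ (Z_2)^n with |C| odd, let A be the adjacency matrix of the cubelike graph X(C), and let G be a graph whose adjacency matrix B has eigenvalues −1 and 2 (e.g., the complete graph K₃). Then exp(iπ(A ⊗ B)) is not a scalar multiple of the identity; in particular the Kronecker product graph X(C) × G is not periodic at time π. -/

import Mathlib

set_option maxHeartbeats 1000000

open Matrix Kronecker Complex

section Aux

open NormedSpace

lemma exp_smul_idem' {A : Type*} [NormedRing A] [NormedAlgebra ℂ A] [CompleteSpace A]
    (x : ℂ) (Q : A) (hQ : Q * Q = Q) :
    NormedSpace.exp (x • Q) = 1 + (Complex.exp x - 1) • Q := by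
  have hpow : ∀ n : ℕ, Q ^ (n + 1) = Q := by
    intro n; induction n with
    | zero => simp
    | succ n ih => rw [pow_succ, ih, hQ]
  have hsum : Summable (fun n : ℕ => ((n.factorial : ℂ))⁻¹ • (x • Q) ^ n) :=
    expSeries_summable' (𝕂 := ℂ) _
  have hc : Summable (fun n : ℕ => ((n.factorial : ℂ))⁻¹ • x ^ n) :=
    expSeries_summable' (𝕂 := ℂ) (𝔸 := ℂ) _
  have hc1 : Summable (fun n : ℕ => (((n+1).factorial : ℂ))⁻¹ • x ^ (n+1)) :=
    (summable_nat_add_iff 1).mpr hc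
  have hexpx : Complex.exp x = 1 + ∑' n : ℕ, (((n+1).factorial : ℂ))⁻¹ • x ^ (n+1) := by
    rw [Complex.exp_eq_exp_ℂ]; simp only [exp_eq_tsum (𝕂 := ℂ)]; rw [Summable.tsum_eq_zero_add hc]
    simp
  simp only [exp_eq_tsum (𝕂 := ℂ)]; rw [Summable.tsum_eq_zero_add hsum]
  have h2 : ∀ n : ℕ, (((n+1).factorial : ℂ))⁻¹ • (x • Q) ^ (n+1)
      = ((((n+1).factorial : ℂ))⁻¹ • x ^ (n+1)) • Q := by
    intro n
    simp [smul_pow, hpow n, smul_smul]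
  simp only [h2]
  rw [Summable.tsum_smul_const hc1, hexpx]
  simp

lemma Matrix.exp_smul_idem {m : Type*} [Fintype m] [DecidableEq m]
    (x : ℂ) (Q : Matrix m m ℂ) (hQ : Q * Q = Q) :
    NormedSpace.exp (x • Q) = 1 + (Complex.exp x - 1) • Q := by
  letI : SeminormedRing (Matrix m m ℂ) := Matrix.linftyOpSemiNormedRing
  letI : NormedRing (Matrix m m ℂ) := Matrix.linftyOpNormedRing
  letI : NormedAlgebra ℂ (Matrix m m ℂ) := Matrix.linftyOpNormedAlgebra
  exact exp_smul_idem' x Q hQ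

lemma sum_kronecker' {ι m p : Type*} [Fintype m] [Fintype p]
    (s : Finset ι) (A : ι → Matrix m m ℂ) (B : Matrix p p ℂ) :
    (∑ i ∈ s, A i) ⊗ₖ B = ∑ i ∈ s, (A i ⊗ₖ B) := by
  ext ⟨a, b⟩ ⟨c, d⟩
  simp [Matrix.sum_apply, Finset.sum_mul]

/-- The key single-factor computation. -/
lemma exp_single {m p : Type*} [Fintype m] [DecidableEq m] [Fintype p] [DecidableEq p]
    (B F₁ F₂ : Matrix p p ℂ)
    (hB : B = (-1 : ℂ) • F₁ + (2 : ℂ) • F₂)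
    (hproj₁ : F₁ * F₁ = F₁) (hproj₂ : F₂ * F₂ = F₂)
    (horth : F₁ * F₂ = 0) (horth' : F₂ * F₁ = 0)
    (P : Matrix m m ℂ) (hP : P * P = 1) :
    NormedSpace.exp (((Real.pi : ℂ) * Complex.I) • (P ⊗ₖ B))
      = 1 - (2 : ℂ) • ((1 : Matrix m m ℂ) ⊗ₖ F₁) := by
  set t : ℂ := (Real.pi : ℂ) * Complex.I with ht
  set Q' : Matrix m m ℂ := (2⁻¹ : ℂ) • (1 + P) with hQ'def
  have h2Q : (2 : ℂ) • Q' = 1 + P := by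
    rw [hQ'def, smul_smul]; norm_num
  have hQ' : Q' * Q' = Q' := by
    rw [hQ'def, smul_mul_smul_comm, mul_add, add_mul, add_mul, hP]
    simp only [one_mul, mul_one]
    match_scalars <;> norm_num
  -- abbreviations
  set K₁ : Matrix (m × p) (m × p) ℂ := (1 : Matrix m m ℂ) ⊗ₖ F₁ with hK₁def
  set K₂ : Matrix (m × p) (m × p) ℂ := (1 : Matrix m m ℂ) ⊗ₖ F₂ with hK₂def
  set Q₁ : Matrix (m × p) (m × p) ℂ := Q' ⊗ₖ F₁ with hQ₁def
  set Q₂ : Matrix (m × p) (m × p) ℂ := Q' ⊗ₖ F₂ with hQ₂def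
  set M₁ : Matrix (m × p) (m × p) ℂ := P ⊗ₖ F₁ with hM₁def
  set M₂ : Matrix (m × p) (m × p) ℂ := P ⊗ₖ F₂ with hM₂def
  have hK₁i : K₁ * K₁ = K₁ := by rw [hK₁def, ← mul_kronecker_mul, one_mul, hproj₁]
  have hK₂i : K₂ * K₂ = K₂ := by rw [hK₂def, ← mul_kronecker_mul, one_mul, hproj₂]
  have hQ₁i : Q₁ * Q₁ = Q₁ := by rw [hQ₁def, ← mul_kronecker_mul, hQ', hproj₁]
  have hQ₂i : Q₂ * Q₂ = Q₂ := by rw [hQ₂def, ← mul_kronecker_mul, hQ', hproj₂]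
  have hQK₁ : Q₁ * K₁ = K₁ * Q₁ := by
    rw [hQ₁def, hK₁def, ← mul_kronecker_mul, ← mul_kronecker_mul, one_mul, mul_one, hproj₁]
  have hQK₂ : Q₂ * K₂ = K₂ * Q₂ := by
    rw [hQ₂def, hK₂def, ← mul_kronecker_mul, ← mul_kronecker_mul, one_mul, mul_one, hproj₂]
  have hM₁ : M₁ = (2 : ℂ) • Q₁ - K₁ := by
    rw [hM₁def, hQ₁def, hK₁def, ← smul_kronecker]
    rw [show P = ((2:ℂ) • Q' - 1) by rw [h2Q]; abel]
    ext ⟨a, b⟩ ⟨c, d⟩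
    simp [Matrix.sub_apply, sub_mul]
  have hM₂ : M₂ = (2 : ℂ) • Q₂ - K₂ := by
    rw [hM₂def, hQ₂def, hK₂def, ← smul_kronecker]
    rw [show P = ((2:ℂ) • Q' - 1) by rw [h2Q]; abel]
    ext ⟨a, b⟩ ⟨c, d⟩
    simp [Matrix.sub_apply, sub_mul]
  -- exponentials of the pieces
  have expM : ∀ (x : ℂ) (Q K M : Matrix (m × p) (m × p) ℂ),
      Q * Q = Q → K * K = K → Q * K = K * Q → M = (2:ℂ) • Q - K →
      NormedSpace.exp (x • M) = (1 + (Complex.exp (2 * x) - 1) • Q) * (1 + (Complex.exp (-x) - 1) • K) := by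
    intro x Q K M hQi hKi hQKc hM
    have hsplit : x • M = (2 * x) • Q + (-x) • K := by
      rw [hM]; module
    have hcomm : Commute ((2 * x) • Q) ((-x) • K) := by
      unfold Commute SemiconjBy
      rw [smul_mul_smul_comm, smul_mul_smul_comm, hQKc, mul_comm]
    rw [hsplit, Matrix.exp_add_of_commute _ _ hcomm,
      Matrix.exp_smul_idem _ _ hQi, Matrix.exp_smul_idem _ _ hKi]
  have e2pi : Complex.exp (-(2 * (Real.pi : ℂ) * Complex.I)) = 1 := by
    rw [Complex.exp_neg, Complex.exp_two_pi_mul_I, inv_one]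
  have expM₁ : NormedSpace.exp ((-t) • M₁) = 1 - (2 : ℂ) • K₁ := by
    rw [expM (-t) Q₁ K₁ M₁ hQ₁i hK₁i hQK₁ hM₁]
    have h1 : Complex.exp (2 * -t) = 1 := by
      rw [show (2 : ℂ) * -t = -(2 * (Real.pi : ℂ) * Complex.I) by rw [ht]; ring, e2pi]
    have h2 : Complex.exp (- -t) = -1 := by
      rw [neg_neg, ht, Complex.exp_pi_mul_I]
    rw [h1, h2]
    rw [show (1:ℂ) - 1 = 0 by ring, show (-1:ℂ) - 1 = -2 by ring]
    rw [zero_smul, add_zero, one_mul]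
    module
  have expM₂ : NormedSpace.exp ((2 * t) • M₂) = 1 := by
    rw [expM (2 * t) Q₂ K₂ M₂ hQ₂i hK₂i hQK₂ hM₂]
    have h1 : Complex.exp (2 * (2 * t)) = 1 := by
      rw [show (2 : ℂ) * (2 * t) = 2 * (Real.pi:ℂ) * Complex.I + 2 * (Real.pi:ℂ) * Complex.I by
        rw [ht]; ring, Complex.exp_add, Complex.exp_two_pi_mul_I, one_mul]
    have h2 : Complex.exp (-(2 * t)) = 1 := by
      rw [show -((2:ℂ) * t) = -(2 * (Real.pi : ℂ) * Complex.I) by rw [ht]; ring, e2pi]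
    rw [h1, h2]
    simp
  -- assemble
  have hPB : t • (P ⊗ₖ B) = (-t) • M₁ + (2 * t) • M₂ := by
    rw [hB, kronecker_add, kronecker_smul, kronecker_smul, ← hM₁def, ← hM₂def]
    module
  have hcommM : Commute ((-t) • M₁) ((2 * t) • M₂) := by
    unfold Commute SemiconjBy
    rw [smul_mul_smul_comm, smul_mul_smul_comm, hM₁def, hM₂def,
      ← mul_kronecker_mul, ← mul_kronecker_mul, hP, horth, horth']
    simp [mul_comm]
  rw [hPB, Matrix.exp_add_of_commute _ _ hcommM, expM₁, expM₂, mul_one]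

end Aux

noncomputable def cubeAdj {n : ℕ} (C : Finset (Fin n → ZMod 2)) :
    Matrix (Fin n → ZMod 2) (Fin n → ZMod 2) ℂ :=
  Matrix.of fun u v => if u - v ∈ C then 1 else 0

noncomputable def transMat {n : ℕ} (c : Fin n → ZMod 2) :
    Matrix (Fin n → ZMod 2) (Fin n → ZMod 2) ℂ :=
  Matrix.of fun u v => if u - v = c then 1 else 0

lemma transMat_mul {n : ℕ} (c d : Fin n → ZMod 2) :
    transMat c * transMat d = transMat (c + d) := by
  ext u v
  simp only [transMat, Matrix.mul_apply, Matrix.of_apply]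
  have key : ∀ w, (if u - w = c then (1:ℂ) else 0) * (if w - v = d then 1 else 0)
      = if w = u - c then (if u - v = c + d then (1:ℂ) else 0) else 0 := by
    intro w
    by_cases hw : w = u - c
    · subst hw
      have h1 : u - (u - c) = c := by abel
      have h2 : (u - c - v = d) ↔ (u - v = c + d) := by
        constructor
        · intro h; rw [← h]; abel
        · intro h; rw [sub_right_comm, h]; abel
      simp [h1, h2]
    · have h3 : u - w ≠ c := fun h => hw (by rw [← h]; abel)
      simp [h3, hw]
  rw [Finset.sum_congr rfl fun w _ => key w, Finset.sum_ite_eq' Finset.univ (u - c)]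
  simp

lemma transMat_zero {n : ℕ} : transMat (0 : Fin n → ZMod 2) = 1 := by
  ext u v
  simp [transMat, Matrix.one_apply, sub_eq_zero]

lemma transMat_sq {n : ℕ} (c : Fin n → ZMod 2) : transMat c * transMat c = 1 := by
  rw [transMat_mul]
  have : c + c = 0 := by
    funext i
    exact CharTwo.add_self_eq_zero (c i)
  rw [this, transMat_zero]

lemma cubeAdj_eq_sum {n : ℕ} (C : Finset (Fin n → ZMod 2)) :
    cubeAdj C = ∑ c ∈ C, transMat c := by
  ext u v
  simp only [cubeAdj, Matrix.of_apply, Matrix.sum_apply, transMat]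
  rw [Finset.sum_ite_eq C (u - v)]

theorem not_periodic_at_pi (n : ℕ) (C : Finset (Fin n → ZMod 2)) (hodd : Odd C.card)
    {p : Type*} [Fintype p] [DecidableEq p]
    (B : Matrix p p ℂ) (F₁ F₂ : Matrix p p ℂ)
    (hB : B = (-1 : ℂ) • F₁ + (2 : ℂ) • F₂)
    (hsum : F₁ + F₂ = 1)
    (hproj₁ : F₁ * F₁ = F₁) (hproj₂ : F₂ * F₂ = F₂)
    (horth : F₁ * F₂ = 0) (horth' : F₂ * F₁ = 0)
    (hne₁ : F₁ ≠ 0) (hne₂ : F₂ ≠ 0) :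
    ¬ ∃ γ : ℂ,
      NormedSpace.exp (((Real.pi : ℂ) * Complex.I) • (cubeAdj C ⊗ₖ B)) = γ • 1 := by
  rintro ⟨γ, hγ⟩
  set t : ℂ := (Real.pi : ℂ) * Complex.I with ht
  set E : Matrix ((Fin n → ZMod 2) × p) ((Fin n → ZMod 2) × p) ℂ :=
    1 - (2 : ℂ) • ((1 : Matrix (Fin n → ZMod 2) (Fin n → ZMod 2) ℂ) ⊗ₖ F₁) with hEdef
  -- the exponential equals E
  have hsplit : t • (cubeAdj C ⊗ₖ B) = ∑ c ∈ C, t • (transMat c ⊗ₖ B) := by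
    rw [cubeAdj_eq_sum, sum_kronecker', Finset.smul_sum]
  have hcomm : (↑C : Set (Fin n → ZMod 2)).Pairwise
      (Function.onFun Commute fun c => t • (transMat c ⊗ₖ B)) := by
    intro c _ d _ _
    show Commute _ _
    unfold Commute SemiconjBy
    simp only
    rw [smul_mul_smul_comm, smul_mul_smul_comm, ← mul_kronecker_mul, ← mul_kronecker_mul,
      transMat_mul, transMat_mul, add_comm d c, mul_comm t t]
  have hexpE : NormedSpace.exp (t • (cubeAdj C ⊗ₖ B)) = E := by
    rw [hsplit, Matrix.exp_sum_of_commute C _ hcomm]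
    have heach : ∀ c ∈ C, NormedSpace.exp (t • (transMat c ⊗ₖ B)) = E := by
      intro c _
      exact exp_single B F₁ F₂ hB hproj₁ hproj₂ horth horth' (transMat c) (transMat_sq c)
    refine (Finset.noncommProd_eq_pow_card C _ _ E heach).trans ?_
    have hE2 : E * E = 1 := by
      have hK : ((1 : Matrix (Fin n → ZMod 2) (Fin n → ZMod 2) ℂ) ⊗ₖ F₁) *
          ((1 : Matrix (Fin n → ZMod 2) (Fin n → ZMod 2) ℂ) ⊗ₖ F₁)
          = (1 : Matrix (Fin n → ZMod 2) (Fin n → ZMod 2) ℂ) ⊗ₖ F₁ := by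
        rw [← mul_kronecker_mul, one_mul, hproj₁]
      rw [hEdef, sub_mul, mul_sub, mul_sub, smul_mul_smul_comm, hK]
      simp only [one_mul, mul_one]
      match_scalars <;> norm_num
    obtain ⟨k, hk⟩ := hodd
    rw [hk, pow_add, pow_mul, sq, hE2, one_pow, one_mul, pow_one]
  rw [hexpE] at hγ
  -- extract F₁ = ((1 - γ)/2) • 1
  have hF₁ : F₁ = ((1 - γ)/2) • 1 := by
    ext i j
    have h : E ((0, i)) ((0, j)) = (γ • (1 : Matrix ((Fin n → ZMod 2) × p)
        ((Fin n → ZMod 2) × p) ℂ)) ((0, i)) ((0, j)) := by rw [hγ]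
    by_cases hij : i = j
    · subst hij
      simp [hEdef, Matrix.one_apply] at h
      simp [Matrix.one_apply]
      linear_combination -h/2
    · simp [hEdef, Matrix.one_apply, hij, Prod.ext_iff] at h
      simp [Matrix.one_apply, hij, h]
  have hF₂ : F₂ = ((1 + γ)/2) • 1 := by
    have h := hsum
    rw [hF₁] at h
    have h2 : F₂ = 1 - ((1 - γ)/2) • 1 := eq_sub_of_add_eq' h
    rw [h2]
    match_scalars <;> ring
  rw [hF₁, hF₂, smul_mul_smul_comm, one_mul] at horth
  by_cases h0 : (1 - γ)/2 * ((1 + γ)/2) = 0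
  · rcases mul_eq_zero.mp h0 with h | h
    · exact hne₁ (by rw [hF₁, h, zero_smul])
    · exact hne₂ (by rw [hF₂, h, zero_smul])
  · rcases smul_eq_zero.mp horth with h | h
    · exact h0 h
    · exact hne₁ (by rw [hF₁, h, smul_zero])
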